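/- arXiv:2311.05737 — 5 statements merged into one kernel-verified Lean document; each statement's English description precedes it below -/
import Mathlib

section
/- Suppose Y is a disconnected set of vectors with decomposition (Y₁, Y₂), and both Y₁ and Y₂ have the property that every triple of vectors is contained in a full subset all of whose subsets are clean. Then Y also has this property. -/
open Set

variable {V : Type*} [AddCommGroup V] [Module ℝ V]

/-- The set of nonnegative linear combinations of elements of `A`. -/
def posSpan (A : Set V) : Set V :=
  {v | ∃ (s : Finset V) (c : V → ℝ),
    (↑s : Set V) ⊆ A ∧ (∀ x ∈ s, 0 ≤ c x) ∧ v = ∑ x ∈ s, c x • x}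

/-- The nonnegative span of the pair `α, β`. -/
def cone2 (α β : V) : Set V := {v | ∃ a b : ℝ, 0 ≤ a ∧ 0 ≤ b ∧ v = a • α + b • β}

/-- `B` is closed in `X`. -/
def IsClosedIn (X B : Set V) : Prop :=
  B ⊆ X ∧ ∀ α ∈ B, ∀ β ∈ B, ∀ γ ∈ X, γ ∈ cone2 α β → γ ∈ B

/-- `B` is coclosed in `X`. -/
def IsCoclosedIn (X B : Set V) : Prop := B ⊆ X ∧ IsClosedIn X (X \ B)

/-- `B` is biclosed in `X`. -/
def IsBiclosedIn (X B : Set V) : Prop := IsClosedIn X B ∧ IsClosedIn X (X \ B)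

/-- `B` is convex in `X`. -/
def IsConvexIn (X B : Set V) : Prop := B ⊆ X ∧ posSpan B ∩ X = B

/-- `B` is biconvex in `X`. -/
def IsBiconvexIn (X B : Set V) : Prop := IsConvexIn X B ∧ IsConvexIn X (X \ B)

/-- `B` is weakly separable in `X`. -/
def WeaklySeparableIn (X B : Set V) : Prop :=
  B ⊆ X ∧ posSpan B ∩ posSpan (X \ B) = {0}

/-- `B` is separable in `X`. -/
def SeparableIn (X B : Set V) : Prop :=
  B ⊆ X ∧ ∃ θ : Module.Dual ℝ V, (∀ α ∈ B, θ α < 0) ∧ (∀ α ∈ X \ B, 0 < θ α)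

/-- `X` is clean: every biclosed subset is weakly separable. -/
def IsCleanIn (X : Set V) : Prop := ∀ B : Set V, IsBiclosedIn X B → WeaklySeparableIn X B

/-- The closure of `U` in `X`: the smallest closed subset of `X` containing `U`. -/
def closureIn (X U : Set V) : Set V := ⋂₀ {C | U ⊆ C ∧ IsClosedIn X C}

/-- The interior of `K` in `X`. -/
def interiorIn (X K : Set V) : Set V := X \ closureIn X (X \ K)

/-- `F` is a full subset of `X`. -/
def IsFullIn (X F : Set V) : Prop :=
  F ⊆ X ∧ ∀ α ∈ F, ∀ β ∈ F, X ∩ (Submodule.span ℝ {α, β} : Set V) ⊆ F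

/-- Every triple of vectors of `X` is contained in a full subset of `X`,
every subset of which is clean. -/
def TripleCleanProp {V : Type*} [AddCommGroup V] [Module ℝ V] (X : Set V) : Prop :=
  ∀ α ∈ X, ∀ β ∈ X, ∀ γ ∈ X,
    ∃ F : Set V, IsFullIn X F ∧ α ∈ F ∧ β ∈ F ∧ γ ∈ F ∧ ∀ Z ⊆ F, IsCleanIn Z

lemma zero_mem_posSpan (A : Set V) : (0 : V) ∈ posSpan A :=
  ⟨∅, fun _ => 0, by simp, by simp, by simp⟩

lemma posSpan_mono {A B : Set V} (h : A ⊆ B) : posSpan A ⊆ posSpan B := by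
  rintro v ⟨s, c, hs, hc, rfl⟩
  exact ⟨s, c, hs.trans h, hc, rfl⟩

lemma posSpan_subset_span {A : Set V} : posSpan A ⊆ (Submodule.span ℝ A : Set V) := by
  rintro v ⟨s, c, hs, hc, rfl⟩
  exact Submodule.sum_mem _ fun x hx => Submodule.smul_mem _ _ (Submodule.subset_span (hs hx))

lemma posSpan_union_decomp {A B : Set V} {v : V} (hv : v ∈ posSpan (A ∪ B)) :
    ∃ a ∈ posSpan A, ∃ b ∈ posSpan B, v = a + b := by
  classical
  obtain ⟨s, c, hs, hc, rfl⟩ := hv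
  refine ⟨∑ x ∈ s.filter (· ∈ A), c x • x,
    ⟨s.filter (· ∈ A), c, ?_, fun x hx => hc x (Finset.mem_filter.mp hx).1, rfl⟩,
    ∑ x ∈ s.filter (fun x => x ∉ A), c x • x,
    ⟨s.filter (fun x => x ∉ A), c, ?_, fun x hx => hc x (Finset.mem_filter.mp hx).1, rfl⟩, ?_⟩
  · intro x hx
    exact (Finset.mem_filter.mp (Finset.mem_coe.mp hx)).2
  · intro x hx
    obtain ⟨hxs, hxA⟩ := Finset.mem_filter.mp (Finset.mem_coe.mp hx)
    exact (hs hxs).resolve_left hxA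
  · exact (Finset.sum_filter_add_sum_filter_not s _ _).symm

lemma sum_ray (γ : V) : ∀ (s : Finset V) (c : V → ℝ),
    (∀ x ∈ s, ∃ d : ℝ, x = d • γ) → ∃ t : ℝ, (∑ x ∈ s, c x • x) = t • γ := by
  classical
  intro s
  induction s using Finset.induction_on with
  | empty => exact fun c _ => ⟨0, by simp⟩
  | @insert a t ha ih =>
    intro c h
    obtain ⟨d, hd⟩ := h a (Finset.mem_insert_self a t)
    obtain ⟨u, hu⟩ := ih c (fun x hx => h x (Finset.mem_insert_of_mem hx))
    refine ⟨c a * d + u, ?_⟩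
    rw [Finset.sum_insert ha, hu, add_smul, hd, smul_smul]

lemma posSpan_ray {A : Set V} {γ : V} (h : ∀ x ∈ A, ∃ d : ℝ, x = d • γ) {v : V}
    (hv : v ∈ posSpan A) : ∃ t : ℝ, v = t • γ := by
  obtain ⟨s, c, hs, hc, rfl⟩ := hv
  exact sum_ray γ s c (fun x hx => h x (hs hx))


lemma isClosedIn_inter {Z B F : Set V} (h : IsClosedIn Z B) :
    IsClosedIn (Z ∩ F) (B ∩ F) :=
  ⟨fun x hx => ⟨h.1 hx.1, hx.2⟩,
   fun a ha b hb g hg hcone => ⟨h.2 a ha.1 b hb.1 g hg.1 hcone, hg.2⟩⟩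

lemma isBiclosedIn_inter {Z B F : Set V} (h : IsBiclosedIn Z B) :
    IsBiclosedIn (Z ∩ F) (B ∩ F) := by
  refine ⟨isClosedIn_inter h.1, ?_⟩
  have he : (Z ∩ F) \ (B ∩ F) = (Z \ B) ∩ F := by
    ext w
    simp only [Set.mem_diff, Set.mem_inter_iff]
    tauto
  rw [he]
  exact isClosedIn_inter h.2

lemma key_plane {Y Y₁ Y₂ : Set V}
    (hunion : Y = Y₁ ∪ Y₂) (hdisj : Disjoint Y₁ Y₂)
    (hfull₁ : IsFullIn Y Y₁) (hfull₂ : IsFullIn Y Y₂)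
    {x y z : V} (hx : x ∈ Y₁) (hy : y ∈ Y₂) (hz : z ∈ Y)
    (hzs : z ∈ Submodule.span ℝ ({x, y} : Set V)) :
    z ∈ Submodule.span ℝ ({x} : Set V) ∨ z ∈ Submodule.span ℝ ({y} : Set V) := by
  obtain ⟨a, b, hab⟩ := Submodule.mem_span_pair.mp hzs
  by_cases hb : b = 0
  · left
    exact Submodule.mem_span_singleton.mpr ⟨a, by rw [← hab, hb, zero_smul, add_zero]⟩
  by_cases ha : a = 0
  · right
    exact Submodule.mem_span_singleton.mpr ⟨b, by rw [← hab, ha, zero_smul, zero_add]⟩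
  exfalso
  have hzY12 : z ∈ Y₁ ∪ Y₂ := by rw [← hunion]; exact hz
  rcases hzY12 with hz1 | hz2
  · have hyspan : y ∈ Submodule.span ℝ ({z, x} : Set V) := by
      refine Submodule.mem_span_pair.mpr ⟨b⁻¹, -(b⁻¹ * a), ?_⟩
      rw [← hab, smul_add, smul_smul, smul_smul, inv_mul_cancel₀ hb, one_smul, neg_smul]
      abel
    have hyY₁ : y ∈ Y₁ := hfull₁.2 z hz1 x hx ⟨hfull₂.1 hy, hyspan⟩
    exact Set.disjoint_left.mp hdisj hyY₁ hy
  · have hxspan : x ∈ Submodule.span ℝ ({z, y} : Set V) := by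
      refine Submodule.mem_span_pair.mpr ⟨a⁻¹, -(a⁻¹ * b), ?_⟩
      rw [← hab, smul_add, smul_smul, smul_smul, inv_mul_cancel₀ ha, one_smul, neg_smul]
      abel
    have hxY₂ : x ∈ Y₂ := hfull₂.2 z hz2 y hy ⟨hfull₁.1 hx, hxspan⟩
    exact Set.disjoint_left.mp hdisj hx hxY₂


lemma mixed_case
    (Y Y₁ Y₂ : Set V) (θ : Module.Dual ℝ V) (hθ : ∀ x ∈ Y, 0 < θ x)
    (hunion : Y = Y₁ ∪ Y₂) (hdisj : Disjoint Y₁ Y₂)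
    (hfull₁ : IsFullIn Y Y₁) (hfull₂ : IsFullIn Y Y₂)
    (h₁ : TripleCleanProp Y₁)
    {α β γ : V} (hα : α ∈ Y₁) (hβ : β ∈ Y₁) (hγ : γ ∈ Y₂) :
    ∃ F : Set V, IsFullIn Y F ∧ α ∈ F ∧ β ∈ F ∧ γ ∈ F ∧ ∀ Z ⊆ F, IsCleanIn Z := by
  obtain ⟨G, hGfull, hαG, hβG, -, hGclean⟩ := h₁ α hα β hβ β hβ
  set W : Submodule ℝ V := Submodule.span ℝ ({α, β} : Set V) with hWdef
  set L : Submodule ℝ V := Submodule.span ℝ ({γ} : Set V) with hLdef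
  set F₁ : Set V := G ∩ ↑W with hF₁def
  set F₂ : Set V := Y ∩ ↑L with hF₂def
  have hGY₁ : G ⊆ Y₁ := hGfull.1
  have hY₁Y : Y₁ ⊆ Y := hfull₁.1
  have hY₂Y : Y₂ ⊆ Y := hfull₂.1
  have hF₁Y₁ : F₁ ⊆ Y₁ := fun x hx => hGY₁ hx.1
  have hF₂Y₂ : F₂ ⊆ Y₂ := by
    intro x hx
    refine hfull₂.2 γ hγ γ hγ ⟨hx.1, ?_⟩
    rw [Set.pair_eq_singleton]
    exact hx.2
  have hmul : ∀ x ∈ F₂, ∃ p : ℝ, 0 < p ∧ x = p • γ := by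
    intro x hx
    obtain ⟨p, hp⟩ := Submodule.mem_span_singleton.mp hx.2
    have hθx := hθ x hx.1
    have hθγ := hθ γ (hY₂Y hγ)
    have hpθ : θ x = p * θ γ := by rw [← hp, map_smul, smul_eq_mul]
    have hppos : 0 < p := by nlinarith
    exact ⟨p, hppos, hp.symm⟩
  have mixedfull : ∀ x ∈ F₁, ∀ y ∈ F₂,
      Y ∩ (Submodule.span ℝ ({x, y} : Set V) : Set V) ⊆ F₁ ∪ F₂ := by
    rintro x hx y hy z ⟨hzY, hzs⟩
    rcases key_plane hunion hdisj hfull₁ hfull₂ (hF₁Y₁ hx) (hF₂Y₂ hy) hzY hzs with h | h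
    · left
      have hzW : z ∈ W := Submodule.span_le.mpr (Set.singleton_subset_iff.mpr hx.2) h
      have hzxx : z ∈ (Submodule.span ℝ ({x, x} : Set V) : Set V) := by
        rw [Set.pair_eq_singleton]
        exact h
      have hzY₁ : z ∈ Y₁ := hfull₁.2 x (hF₁Y₁ hx) x (hF₁Y₁ hx) ⟨hzY, hzxx⟩
      exact ⟨hGfull.2 x hx.1 x hx.1 ⟨hzY₁, hzxx⟩, hzW⟩
    · right
      exact ⟨hzY, Submodule.span_le.mpr (Set.singleton_subset_iff.mpr hy.2) h⟩
  refine ⟨F₁ ∪ F₂, ⟨?_, ?_⟩,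
    Or.inl ⟨hαG, Submodule.subset_span (Set.mem_insert α {β})⟩,
    Or.inl ⟨hβG, Submodule.subset_span (Set.mem_insert_of_mem α rfl)⟩,
    Or.inr ⟨hY₂Y hγ, Submodule.subset_span rfl⟩, ?_⟩
  · rintro x (hx | hx)
    exacts [hY₁Y (hF₁Y₁ hx), hx.1]
  · rintro x (hx | hx) y (hy | hy)
    · rintro z ⟨hzY, hzs⟩
      have hzW : z ∈ W :=
        Submodule.span_le.mpr (Set.insert_subset_iff.mpr
          ⟨hx.2, Set.singleton_subset_iff.mpr hy.2⟩) hzs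
      have hzY₁ : z ∈ Y₁ := hfull₁.2 x (hF₁Y₁ hx) y (hF₁Y₁ hy) ⟨hzY, hzs⟩
      exact Or.inl ⟨hGfull.2 x hx.1 y hy.1 ⟨hzY₁, hzs⟩, hzW⟩
    · exact mixedfull x hx y hy
    · intro z hz
      refine mixedfull y hy x hx ⟨hz.1, ?_⟩
      rw [Set.pair_comm y x]
      exact hz.2
    · rintro z ⟨hzY, hzs⟩
      right
      refine ⟨hzY, Submodule.span_le.mpr (Set.insert_subset_iff.mpr
        ⟨hx.2, Set.singleton_subset_iff.mpr hy.2⟩) hzs⟩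
  · intro Z hZF B hB
    have hBZ : B ⊆ Z := hB.1.1
    refine ⟨hBZ, ?_⟩
    have hZ₁G : Z ∩ F₁ ⊆ G := fun x hx => hx.2.1
    have hsep := (hGclean (Z ∩ F₁) hZ₁G (B ∩ F₁) (isBiclosedIn_inter hB)).2
    have hdiffeq : (Z ∩ F₁) \ (B ∩ F₁) = (Z \ B) ∩ F₁ := by
      ext w
      simp only [Set.mem_diff, Set.mem_inter_iff]
      tauto
    rw [hdiffeq] at hsep
    have hpsW : ∀ A : Set V, A ⊆ F₁ → ∀ w ∈ posSpan A, w ∈ W := by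
      intro A hA w hw
      exact Submodule.span_le.mpr (fun u hu => (hA hu).2) (posSpan_subset_span hw)
    have hγnotW : γ ∉ W := by
      intro hγW
      have hγY₁ : γ ∈ Y₁ := hfull₁.2 α hα β hβ ⟨hY₂Y hγ, hγW⟩
      exact Set.disjoint_left.mp hdisj hγY₁ hγ
    have hraysub : ∀ A : Set V, A ⊆ F₂ → ∀ w ∈ posSpan A, ∃ t : ℝ, w = t • γ := by
      intro A hA w hw
      exact posSpan_ray (fun x hx => ⟨(hmul x (hA hx)).choose, (hmul x (hA hx)).choose_spec.2⟩) hw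
    ext v
    simp only [Set.mem_inter_iff, Set.mem_singleton_iff]
    constructor
    · rintro ⟨hvB, hvC⟩
      have hBC₂ : B ∩ F₂ = ∅ ∨ (Z \ B) ∩ F₂ = ∅ := by
        by_contra h
        push_neg at h
        obtain ⟨b, hb⟩ := h.1
        obtain ⟨c, hc⟩ := h.2
        obtain ⟨p, hp0, hpb⟩ := hmul b hb.2
        obtain ⟨q, hq0, hqc⟩ := hmul c hc.2
        have hcB : c ∈ B := by
          refine hB.1.2 b hb.1 b hb.1 c hc.1.1 ⟨q / p, 0, by positivity, le_refl 0, ?_⟩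
          rw [hqc, hpb, smul_smul, div_mul_cancel₀ q (ne_of_gt hp0), zero_smul, add_zero]
        exact hc.1.2 hcB
      have hBdec : B = (B ∩ F₁) ∪ (B ∩ F₂) := by
        rw [← Set.inter_union_distrib_left]
        exact (Set.inter_eq_left.mpr (hBZ.trans hZF)).symm
      have hCdec : Z \ B = ((Z \ B) ∩ F₁) ∪ ((Z \ B) ∩ F₂) := by
        rw [← Set.inter_union_distrib_left]
        exact (Set.inter_eq_left.mpr ((Set.diff_subset).trans hZF)).symm
      rcases hBC₂ with hB₂ | hC₂
      · have hBF₁ : B ⊆ B ∩ F₁ := fun w hw =>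
          ⟨hw, ((hBZ.trans hZF) hw).resolve_right
            (fun h2 => Set.eq_empty_iff_forall_notMem.mp hB₂ w ⟨hw, h2⟩)⟩
        have hvB₁ : v ∈ posSpan (B ∩ F₁) := posSpan_mono hBF₁ hvB
        obtain ⟨c₁, hc₁, c₂, hc₂, hvdec⟩ := posSpan_union_decomp (hCdec ▸ hvC)
        obtain ⟨s, hs⟩ := hraysub _ (fun w hw => hw.2) c₂ hc₂
        by_cases hs0 : s = 0
        · have hveq : v = c₁ := by rw [hvdec, hs, hs0, zero_smul, add_zero]
          have hmem : v ∈ posSpan (B ∩ F₁) ∩ posSpan ((Z \ B) ∩ F₁) := ⟨hvB₁, hveq ▸ hc₁⟩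
          rw [hsep] at hmem
          exact hmem
        · exfalso
          apply hγnotW
          have hvW : v ∈ W := hpsW _ (fun w hw => hw.2) _ hvB₁
          have hc₁W : c₁ ∈ W := hpsW _ (fun w hw => hw.2) _ hc₁
          have hγeq : γ = s⁻¹ • (v - c₁) := by
            rw [hvdec, hs, add_sub_cancel_left, smul_smul, inv_mul_cancel₀ hs0, one_smul]
          rw [hγeq]
          exact Submodule.smul_mem _ _ (Submodule.sub_mem _ hvW hc₁W)
      · have hCF₁ : Z \ B ⊆ (Z \ B) ∩ F₁ := fun w hw =>
          ⟨hw, (((Set.diff_subset).trans hZF) hw).resolve_right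
            (fun h2 => Set.eq_empty_iff_forall_notMem.mp hC₂ w ⟨hw, h2⟩)⟩
        have hvC₁ : v ∈ posSpan ((Z \ B) ∩ F₁) := posSpan_mono hCF₁ hvC
        obtain ⟨b₁, hb₁, b₂, hb₂, hvdec⟩ := posSpan_union_decomp (hBdec ▸ hvB)
        obtain ⟨s, hs⟩ := hraysub _ (fun w hw => hw.2) b₂ hb₂
        by_cases hs0 : s = 0
        · have hveq : v = b₁ := by rw [hvdec, hs, hs0, zero_smul, add_zero]
          have hmem : v ∈ posSpan (B ∩ F₁) ∩ posSpan ((Z \ B) ∩ F₁) := ⟨hveq ▸ hb₁, hvC₁⟩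
          rw [hsep] at hmem
          exact hmem
        · exfalso
          apply hγnotW
          have hvW : v ∈ W := hpsW _ (fun w hw => hw.2) _ hvC₁
          have hb₁W : b₁ ∈ W := hpsW _ (fun w hw => hw.2) _ hb₁
          have hγeq : γ = s⁻¹ • (v - b₁) := by
            rw [hvdec, hs, add_sub_cancel_left, smul_smul, inv_mul_cancel₀ hs0, one_smul]
          rw [hγeq]
          exact Submodule.smul_mem _ _ (Submodule.sub_mem _ hvW hb₁W)
    · rintro rfl
      exact ⟨zero_mem_posSpan _, zero_mem_posSpan _⟩

lemma pure_case (Y Y₁ : Set V) (hfull₁ : IsFullIn Y Y₁) (h₁ : TripleCleanProp Y₁)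
    {α β γ : V} (hα : α ∈ Y₁) (hβ : β ∈ Y₁) (hγ : γ ∈ Y₁) :
    ∃ F : Set V, IsFullIn Y F ∧ α ∈ F ∧ β ∈ F ∧ γ ∈ F ∧ ∀ Z ⊆ F, IsCleanIn Z := by
  obtain ⟨F, hF, hαF, hβF, hγF, hcl⟩ := h₁ α hα β hβ γ hγ
  refine ⟨F, ⟨hF.1.trans hfull₁.1, ?_⟩, hαF, hβF, hγF, hcl⟩
  intro x hx y hy z hz
  exact hF.2 x hx y hy ⟨hfull₁.2 x (hF.1 hx) y (hF.1 hy) hz, hz.2⟩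

/-- If `Y` is disconnected with decomposition `(Y₁, Y₂)` and both parts
have the property that every triple lies in a full subset all of whose subsets are
clean, then `Y` has the same property. -/
theorem tripleClean_of_disconnected
    {V : Type*} [AddCommGroup V] [Module ℝ V]
    (Y Y₁ Y₂ : Set V)
    (hhalf : ∃ θ : Module.Dual ℝ V, ∀ x ∈ Y, 0 < θ x)
    (hunion : Y = Y₁ ∪ Y₂) (hdisj : Disjoint Y₁ Y₂)
    (hne₁ : Y₁.Nonempty) (hne₂ : Y₂.Nonempty)
    (hfull₁ : IsFullIn Y Y₁) (hfull₂ : IsFullIn Y Y₂)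
    (h₁ : TripleCleanProp Y₁) (h₂ : TripleCleanProp Y₂) :
    TripleCleanProp Y := by
  obtain ⟨θ, hθ⟩ := hhalf
  have hunion' : Y = Y₂ ∪ Y₁ := by rw [hunion, Set.union_comm]
  have hdisj' := hdisj.symm
  intro α hαY β hβY γ hγY
  rcases (show α ∈ Y₁ ∪ Y₂ by rw [← hunion]; exact hαY) with hα | hα <;>
    rcases (show β ∈ Y₁ ∪ Y₂ by rw [← hunion]; exact hβY) with hβ | hβ <;>
      rcases (show γ ∈ Y₁ ∪ Y₂ by rw [← hunion]; exact hγY) with hγ | hγ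
  · exact pure_case Y Y₁ hfull₁ h₁ hα hβ hγ
  · exact mixed_case Y Y₁ Y₂ θ hθ hunion hdisj hfull₁ hfull₂ h₁ hα hβ hγ
  · obtain ⟨F, h1, h2, h3, h4, h5⟩ :=
      mixed_case Y Y₁ Y₂ θ hθ hunion hdisj hfull₁ hfull₂ h₁ hα hγ hβ
    exact ⟨F, h1, h2, h4, h3, h5⟩
  · obtain ⟨F, h1, h2, h3, h4, h5⟩ :=
      mixed_case Y Y₂ Y₁ θ hθ hunion' hdisj' hfull₂ hfull₁ h₂ hβ hγ hα
    exact ⟨F, h1, h4, h2, h3, h5⟩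
  · obtain ⟨F, h1, h2, h3, h4, h5⟩ :=
      mixed_case Y Y₁ Y₂ θ hθ hunion hdisj hfull₁ hfull₂ h₁ hβ hγ hα
    exact ⟨F, h1, h4, h2, h3, h5⟩
  · obtain ⟨F, h1, h2, h3, h4, h5⟩ :=
      mixed_case Y Y₂ Y₁ θ hθ hunion' hdisj' hfull₂ hfull₁ h₂ hα hγ hβ
    exact ⟨F, h1, h2, h4, h3, h5⟩
  · exact mixed_case Y Y₂ Y₁ θ hθ hunion' hdisj' hfull₂ hfull₁ h₂ hα hβ hγ
  · exact pure_case Y Y₂ hfull₂ h₂ hα hβ hγ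
end

section
/- Let X have a suitable ordering, let X_m be an initial segment, and let U be coclosed in X_m. Then the closure of U in X is biclosed in X. -/
open Set

variable {V : Type*} [AddCommGroup V] [Module ℝ V]

variable {V : Type*} [AddCommGroup V] [Module ℝ V]

/-- `Y` is a linear subset of `X`: the intersection of `X` with a linear subspace. -/
def IsLinearSubsetOf (X Y : Set V) : Prop := ∃ L : Submodule ℝ V, Y = X ∩ (L : Set V)

/-- `α` is a fundamental vector of `Y`. -/
def IsFundIn (Y : Set V) (α : V) : Prop := α ∈ Y ∧ α ∉ posSpan (Y \ {α})

/-- The index domain of an enumeration of length `N` (with `N = ⊤` for countably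
infinite sets). -/
def domN (N : ℕ∞) : Set ℕ := {j | (j : ℕ∞) < N}

/-- The whole set `X` enumerated by `g`. -/
def wholeSet (N : ℕ∞) (g : ℕ → V) : Set V := g '' domN N

/-- The initial segment `Xᵢ = {γ₁, ..., γᵢ}` of the enumeration. -/
def seg (N : ℕ∞) (g : ℕ → V) (i : ℕ) : Set V := g '' (domN N ∩ {j | j < i})

/-- The enumeration `g` (of length `N`) is a suitable ordering of
`X = wholeSet N g`: `g` is injective, `X` lies in an open half-space, every
2-dimensional linear subset of `X` has fundamental vectors which are ordered before
all other vectors of that subset, and every triple of vectors of an initial segment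
`Xᵢ` lies in a full subset `F` of `X` with `F ∩ Xᵢ` clean. -/
def SuitableEnum (N : ℕ∞) (g : ℕ → V) : Prop :=
  Set.InjOn g (domN N) ∧
  (∃ θ : Module.Dual ℝ V, ∀ x ∈ wholeSet N g, 0 < θ x) ∧
  (∀ Y : Set V, IsLinearSubsetOf (wholeSet N g) Y →
      Module.finrank ℝ (Submodule.span ℝ Y) = 2 →
      (∃ α β : V, IsFundIn Y α ∧ IsFundIn Y β ∧ Y ⊆ cone2 α β) ∧
      (∀ α β : V, IsFundIn Y α → β ∈ Y → ¬ IsFundIn Y β →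
        ∀ a ∈ domN N, ∀ b ∈ domN N, g a = α → g b = β → a < b)) ∧
  (∀ i : ℕ, ∀ α ∈ seg N g i, ∀ β ∈ seg N g i, ∀ γ ∈ seg N g i,
      ∃ F : Set V, IsFullIn (wholeSet N g) F ∧ α ∈ F ∧ β ∈ F ∧ γ ∈ F ∧
        IsCleanIn (F ∩ seg N g i))

section Helpers
variable {V : Type*} [AddCommGroup V] [Module ℝ V]

lemma mem_posSpan_self {A : Set V} {x : V} (hx : x ∈ A) : x ∈ posSpan A :=
  ⟨{x}, fun _ => 1, by simpa using hx, by norm_num, by simp⟩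

lemma posSpan_smul {A : Set V} {x : V} {a : ℝ} (ha : 0 ≤ a) (hx : x ∈ posSpan A) :
    a • x ∈ posSpan A := by
  obtain ⟨s, c, hsA, hc, rfl⟩ := hx
  refine ⟨s, fun v => a * c v, hsA, fun v hv => mul_nonneg ha (hc v hv), ?_⟩
  rw [Finset.smul_sum]
  exact Finset.sum_congr rfl fun v _ => (smul_smul a (c v) v)

private lemma sum_union_ite [DecidableEq V] {s t : Finset V} (c : V → ℝ) :
    ∑ v ∈ s ∪ t, (if v ∈ s then c v else 0) • v = ∑ v ∈ s, c v • v := by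
  rw [← Finset.sum_subset Finset.subset_union_left
    (fun v _ hv => by rw [if_neg hv, zero_smul])]
  exact Finset.sum_congr rfl fun v hv => by rw [if_pos hv]

lemma posSpan_add {A : Set V} {x y : V} (hx : x ∈ posSpan A) (hy : y ∈ posSpan A) :
    x + y ∈ posSpan A := by
  classical
  obtain ⟨s, c, hsA, hc, rfl⟩ := hx
  obtain ⟨t, d, htA, hd, rfl⟩ := hy
  refine ⟨s ∪ t, fun v => (if v ∈ s then c v else 0) + (if v ∈ t then d v else 0),
    ?_, ?_, ?_⟩
  · intro v hv
    rcases Finset.mem_union.1 (by exact_mod_cast hv) with h | h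
    exacts [hsA h, htA h]
  · intro v _
    have h1 : (0:ℝ) ≤ if v ∈ s then c v else 0 := by
      split_ifs with h; exacts [hc v h, le_refl 0]
    have h2 : (0:ℝ) ≤ if v ∈ t then d v else 0 := by
      split_ifs with h; exacts [hd v h, le_refl 0]
    exact add_nonneg h1 h2
  · have : ∑ v ∈ s ∪ t, ((if v ∈ s then c v else 0) + (if v ∈ t then d v else 0)) • v
        = (∑ v ∈ s ∪ t, (if v ∈ s then c v else 0) • v)
          + ∑ v ∈ s ∪ t, (if v ∈ t then d v else 0) • v := by
      rw [← Finset.sum_add_distrib]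
      exact Finset.sum_congr rfl fun v _ => by rw [add_smul]
    rw [this, sum_union_ite]
    congr 1
    rw [← Finset.sum_subset Finset.subset_union_right
      (fun v _ hv => by rw [if_neg hv, zero_smul])]
    exact Finset.sum_congr rfl fun v hv => by rw [if_pos hv]

lemma cone2_comm (α β : V) : cone2 α β = cone2 β α := by
  ext v
  constructor <;> rintro ⟨a, b, ha, hb, rfl⟩ <;> exact ⟨b, a, hb, ha, add_comm _ _⟩

lemma cone2_subset_posSpan {A : Set V} {α β : V} (hα : α ∈ A) (hβ : β ∈ A) :
    cone2 α β ⊆ posSpan A := by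
  rintro v ⟨a, b, ha, hb, rfl⟩
  exact posSpan_add (posSpan_smul ha (mem_posSpan_self hα))
    (posSpan_smul hb (mem_posSpan_self hβ))

lemma subset_closureIn (X U : Set V) : U ⊆ closureIn X U :=
  fun _x hx => Set.mem_sInter.2 fun _C hC => hC.1 hx

lemma closureIn_subset {X U C : Set V} (hUC : U ⊆ C) (hC : IsClosedIn X C) :
    closureIn X U ⊆ C :=
  Set.sInter_subset_of_mem ⟨hUC, hC⟩

lemma isClosedIn_self (X : Set V) : IsClosedIn X X :=
  ⟨subset_rfl, fun _ _ _ _ γ hγ _ => hγ⟩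

lemma isClosedIn_closureIn {X U : Set V} (hUX : U ⊆ X) : IsClosedIn X (closureIn X U) := by
  refine ⟨closureIn_subset hUX (isClosedIn_self X), ?_⟩
  intro α hα β hβ ζ hζX hζ
  refine Set.mem_sInter.2 fun C hC => ?_
  exact hC.2.2 α (Set.mem_sInter.1 hα C hC) β (Set.mem_sInter.1 hβ C hC) ζ hζX hζ

lemma IsClosedIn.restrict {X B S : Set V} (h : IsClosedIn X B) (hS : S ⊆ X) :
    IsClosedIn S (B ∩ S) := by
  refine ⟨Set.inter_subset_right, ?_⟩
  rintro α ⟨hα, _⟩ β ⟨hβ, _⟩ ζ hζS hζ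
  exact ⟨h.2 α hα β hβ ζ (hS hζS) hζ, hζS⟩

lemma IsBiclosedIn.restrict {X B S : Set V} (h : IsBiclosedIn X B) (hS : S ⊆ X) :
    IsBiclosedIn S (B ∩ S) := by
  refine ⟨h.1.restrict hS, ?_⟩
  have : S \ (B ∩ S) = (X \ B) ∩ S := by
    ext x; simp only [Set.mem_diff, Set.mem_inter_iff]
    exact ⟨fun ⟨hxS, hx⟩ => ⟨⟨hS hxS, fun hB => hx ⟨hB, hxS⟩⟩, hxS⟩,
      fun ⟨⟨_, hnB⟩, hxS⟩ => ⟨hxS, fun h' => hnB h'.1⟩⟩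
  rw [this]
  exact h.2.restrict hS

end Helpers
section Helpers2
variable {V : Type*} [AddCommGroup V] [Module ℝ V] {N : ℕ∞} {g : ℕ → V}

lemma mem_seg_iff {i : ℕ} {x : V} :
    x ∈ seg N g i ↔ ∃ j, j ∈ domN N ∧ j < i ∧ g j = x := by
  simp [seg, Set.mem_image]
  tauto

lemma seg_subset_wholeSet (N : ℕ∞) (g : ℕ → V) (i : ℕ) : seg N g i ⊆ wholeSet N g :=
  Set.image_mono (f := g) Set.inter_subset_left

lemma seg_mono {i j : ℕ} (h : i ≤ j) : seg N g i ⊆ seg N g j := by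
  apply Set.image_mono
  exact Set.inter_subset_inter_right _ fun x hx => lt_of_lt_of_le hx h

lemma seg_succ_of_lt {i : ℕ} (hi : (i : ℕ∞) < N) :
    seg N g (i + 1) = insert (g i) (seg N g i) := by
  ext x
  rw [mem_seg_iff, Set.mem_insert_iff, mem_seg_iff]
  constructor
  · rintro ⟨j, hj, hji, rfl⟩
    rcases Nat.lt_succ_iff_lt_or_eq.1 hji with h | rfl
    · exact Or.inr ⟨j, hj, h, rfl⟩
    · exact Or.inl rfl
  · rintro (rfl | ⟨j, hj, hji, rfl⟩)
    · exact ⟨i, hi, Nat.lt_succ_self i, rfl⟩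
    · exact ⟨j, hj, Nat.lt_succ_of_lt hji, rfl⟩

lemma seg_succ_of_not_lt {i : ℕ} (hi : ¬ (i : ℕ∞) < N) :
    seg N g (i + 1) = seg N g i := by
  ext x
  rw [mem_seg_iff, mem_seg_iff]
  constructor
  · rintro ⟨j, hj, hji, rfl⟩
    rcases Nat.lt_succ_iff_lt_or_eq.1 hji with h | rfl
    · exact ⟨j, hj, h, rfl⟩
    · exact absurd hj hi
  · rintro ⟨j, hj, hji, rfl⟩
    exact ⟨j, hj, Nat.lt_succ_of_lt hji, rfl⟩

lemma not_mem_seg_self (hinj : Set.InjOn g (domN N)) {i : ℕ} (hi : (i : ℕ∞) < N) :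
    g i ∉ seg N g i := by
  rintro hmem
  obtain ⟨j, hj, hji, hgj⟩ := mem_seg_iff.1 hmem
  exact absurd (hinj hj hi hgj) (Nat.ne_of_lt hji)

lemma mem_wholeSet_of_dom {i : ℕ} (hi : (i : ℕ∞) < N) : g i ∈ wholeSet N g :=
  ⟨i, hi, rfl⟩

lemma exists_dual_pair {φ ψ : V} (h : LinearIndependent ℝ ![φ, ψ]) :
    ∃ f₁ f₂ : Module.Dual ℝ V, f₁ φ = 1 ∧ f₁ ψ = 0 ∧ f₂ φ = 0 ∧ f₂ ψ = 1 := by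
  have hφψ : φ ≠ ψ := by
    intro hEq
    have := h.injective (by simp [hEq] : (![φ, ψ] : Fin 2 → V) 0 = ![φ, ψ] 1)
    simp at this
  have hinj : Function.Injective ![φ, ψ] := h.injective
  have hsub : LinearIndepOn ℝ id (Set.range ![φ, ψ]) :=
    (linearIndepOn_id_range_iff hinj).2 h
  let b := Module.Basis.extend hsub
  have hφr : φ ∈ Set.range ![φ, ψ] := ⟨0, rfl⟩
  have hψr : ψ ∈ Set.range ![φ, ψ] := ⟨1, rfl⟩
  have hφm : φ ∈ hsub.extend (Set.subset_univ _) := hsub.subset_extend _ hφr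
  have hψm : ψ ∈ hsub.extend (Set.subset_univ _) := hsub.subset_extend _ hψr
  have coord_self : ∀ (x : V) (hx : x ∈ hsub.extend (Set.subset_univ _)),
      b.coord ⟨x, hx⟩ x = 1 := by
    intro x hx
    have h1 : b.repr x = Finsupp.single ⟨x, hx⟩ 1 := by
      conv_lhs => rw [show (x : V) = b ⟨x, hx⟩ from (Module.Basis.extend_apply_self hsub ⟨x, hx⟩).symm]
      exact b.repr_self _
    rw [Module.Basis.coord_apply, h1, Finsupp.single_eq_same]
  have coord_ne : ∀ (x : V) (hx : x ∈ hsub.extend (Set.subset_univ _))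
      (y : V) (hy : y ∈ hsub.extend (Set.subset_univ _)), y ≠ x →
      b.coord ⟨x, hx⟩ y = 0 := by
    intro x hx y hy hne
    have h1 : b.repr y = Finsupp.single ⟨y, hy⟩ 1 := by
      conv_lhs => rw [show (y : V) = b ⟨y, hy⟩ from (Module.Basis.extend_apply_self hsub ⟨y, hy⟩).symm]
      exact b.repr_self _
    rw [Module.Basis.coord_apply, h1, Finsupp.single_eq_of_ne' (by simpa [Subtype.ext_iff] using hne)]
  exact ⟨b.coord ⟨φ, hφm⟩, b.coord ⟨ψ, hψm⟩, coord_self φ hφm,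
    coord_ne φ hφm ψ hψm (Ne.symm hφψ), coord_ne ψ hψm φ hφm hφψ, coord_self ψ hψm⟩

end Helpers2
section Helpers3
variable {V : Type*} [AddCommGroup V] [Module ℝ V]

lemma cone2_step {φ ψ : V} (f₁ f₂ : Module.Dual ℝ V)
    (h1φ : f₁ φ = 1) (h1ψ : f₁ ψ = 0) (h2φ : f₂ φ = 0) (h2ψ : f₂ ψ = 1)
    {u v : V} (hu : u ∈ cone2 φ ψ) (hv : v ∈ cone2 φ ψ) (hu0 : u ≠ 0)
    (hD : 0 ≤ f₁ u * f₂ v - f₂ u * f₁ v) : v ∈ cone2 u ψ := by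
  obtain ⟨c₁, c₂, hc₁, hc₂, rfl⟩ := hu
  obtain ⟨d₁, d₂, hd₁, hd₂, rfl⟩ := hv
  have e1 : f₁ (c₁ • φ + c₂ • ψ) = c₁ := by
    simp [map_add, map_smul, h1φ, h1ψ]
  have e2 : f₂ (c₁ • φ + c₂ • ψ) = c₂ := by
    simp [map_add, map_smul, h2φ, h2ψ]
  have e3 : f₁ (d₁ • φ + d₂ • ψ) = d₁ := by
    simp [map_add, map_smul, h1φ, h1ψ]
  have e4 : f₂ (d₁ • φ + d₂ • ψ) = d₂ := by
    simp [map_add, map_smul, h2φ, h2ψ]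
  rw [e1, e2, e3, e4] at hD
  rcases eq_or_lt_of_le hc₁ with hc₁0 | hc₁pos
  · -- c₁ = 0, so u = c₂ • ψ with c₂ > 0
    have hc₂0 : c₂ ≠ 0 := by
      intro h0
      exact hu0 (by rw [← hc₁0, h0, zero_smul, zero_smul, add_zero])
    have hc₂pos : 0 < c₂ := lt_of_le_of_ne hc₂ (Ne.symm hc₂0)
    have hd₁0 : d₁ = 0 := by nlinarith
    exact ⟨0, d₂, le_refl 0, hd₂, by rw [hd₁0]; module⟩
  · refine ⟨d₁ / c₁, (c₁ * d₂ - c₂ * d₁) / c₁, div_nonneg hd₁ hc₁pos.le,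
      div_nonneg hD hc₁pos.le, ?_⟩
    have : c₁ ≠ 0 := ne_of_gt hc₁pos
    match_scalars <;> field_simp <;> ring

lemma indep_of_pair {φ ψ p q : V}
    (hp : p ∈ cone2 φ ψ) (hq : q ∈ cone2 φ ψ)
    (hind : ∀ s t : ℝ, s • p + t • q = 0 → s = 0 ∧ t = 0) :
    LinearIndependent ℝ ![φ, ψ] := by
  rw [LinearIndependent.pair_iff]
  obtain ⟨c₁, c₂, _, _, rfl⟩ := hp
  obtain ⟨d₁, d₂, _, _, rfl⟩ := hq
  have hk : c₁ * d₂ - c₂ * d₁ ≠ 0 := by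
    intro hk0
    have h1 : d₂ • (c₁ • φ + c₂ • ψ) + (-c₂) • (d₁ • φ + d₂ • ψ) = 0 := by
      match_scalars <;> nlinarith [hk0]
    obtain ⟨h2, h3⟩ := hind _ _ h1
    have h4 : (-d₁) • (c₁ • φ + c₂ • ψ) + c₁ • (d₁ • φ + d₂ • ψ) = 0 := by
      match_scalars <;> nlinarith [hk0]
    obtain ⟨h5, h6⟩ := hind _ _ h4
    have hc₂ : c₂ = 0 := by linarith [neg_eq_zero.1 h3]
    have hzero : (1 : ℝ) • (c₁ • φ + c₂ • ψ) + (0 : ℝ) • (d₁ • φ + d₂ • ψ) = 0 := by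
      rw [h6, hc₂]
      module
    exact one_ne_zero (hind 1 0 hzero).1
  intro s t hst
  have key : (s * d₂ - t * d₁) • (c₁ • φ + c₂ • ψ) + (-(s * c₂) + t * c₁) • (d₁ • φ + d₂ • ψ)
      = (c₁ * d₂ - c₂ * d₁) • (s • φ + t • ψ) := by module
  rw [hst, smul_zero] at key
  obtain ⟨e1, e2⟩ := hind _ _ key
  constructor
  · have hs : s * (c₁ * d₂ - c₂ * d₁) = 0 := by linear_combination c₁ * e1 + d₁ * e2
    exact (mul_eq_zero.1 hs).resolve_right hk
  · have ht : t * (c₁ * d₂ - c₂ * d₁) = 0 := by linear_combination c₂ * e1 + d₂ * e2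
    exact (mul_eq_zero.1 ht).resolve_right hk

end Helpers3
section Helpers4
variable {V : Type*} [AddCommGroup V] [Module ℝ V]

lemma geom_lemma {N : ℕ∞} {g : ℕ → V} (hs : SuitableEnum N g) {i : ℕ}
    (hi : (i : ℕ∞) < N) {p q : V} (hp : p ∈ seg N g i) (hq : q ∈ seg N g i)
    {a b : ℝ} (ha : 0 < a) (hb : 0 < b) (heq : q = a • p + b • g i)
    (hind : ∀ s t : ℝ, s • p + t • g i = 0 → s = 0 ∧ t = 0) :
    ∃ w, w ∈ seg N g i ∧ q ∈ cone2 p w ∧ g i ∈ cone2 q w := by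
  obtain ⟨θ, hθ⟩ := hs.2.1
  have hne : ∀ x ∈ wholeSet N g, x ≠ (0 : V) := by
    intro x hx h0
    have := hθ x hx
    rw [h0, map_zero] at this
    exact lt_irrefl 0 this
  set Y : Set V := wholeSet N g ∩ ((Submodule.span ℝ {p, g i} : Submodule ℝ V) : Set V) with hYdef
  have hYlin : IsLinearSubsetOf (wholeSet N g) Y := ⟨_, rfl⟩
  have hpX : p ∈ wholeSet N g := seg_subset_wholeSet N g i hp
  have hqX : q ∈ wholeSet N g := seg_subset_wholeSet N g i hq
  have hγX : g i ∈ wholeSet N g := mem_wholeSet_of_dom hi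
  have hpY : p ∈ Y := ⟨hpX, Submodule.subset_span (by simp)⟩
  have hγY : g i ∈ Y := ⟨hγX, Submodule.subset_span (by simp)⟩
  have hqY : q ∈ Y := by
    refine ⟨hqX, ?_⟩
    rw [heq]
    exact Submodule.add_mem _
      (Submodule.smul_mem _ _ (Submodule.subset_span (by simp)))
      (Submodule.smul_mem _ _ (Submodule.subset_span (by simp)))
  have hspan : Submodule.span ℝ Y = Submodule.span ℝ {p, g i} := by
    refine le_antisymm (Submodule.span_le.2 Set.inter_subset_right) (Submodule.span_le.2 ?_)
    rintro x hx
    rcases Set.mem_insert_iff.1 hx with rfl | hx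
    · exact Submodule.subset_span hpY
    · rw [Set.mem_singleton_iff] at hx
      subst hx
      exact Submodule.subset_span hγY
  have hLI : LinearIndependent ℝ ![p, g i] := LinearIndependent.pair_iff.2 hind
  have hrange : Set.range ![p, g i] = ({p, g i} : Set V) := by
    simp [Matrix.range_cons, Matrix.range_empty]
    exact Set.pair_comm _ _
  have hrank : Module.finrank ℝ (Submodule.span ℝ Y) = 2 := by
    rw [hspan, ← hrange, finrank_span_eq_card hLI]
    simp
  obtain ⟨⟨φ, ψ, hφf, hψf, hYc⟩, horder⟩ := hs.2.2.1 Y hYlin hrank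
  obtain ⟨jq, hjqdom, hjqi, hgjq⟩ := mem_seg_iff.1 hq
  have hγns : g i ∉ seg N g i := not_mem_seg_self hs.1 hi
  have hqγ : q ≠ g i := fun h => hγns (h ▸ hq)
  have hqp : q ≠ p := by
    intro h
    have h0 : (a - 1) • p + b • g i = (a • p + b • g i) - p := by module
    rw [← heq, h, sub_self] at h0
    exact (ne_of_gt hb) (hind _ _ h0).2
  have hqnf : ¬ IsFundIn Y q := by
    intro hf
    refine hf.2 ?_
    have hmem : a • p + b • g i ∈ posSpan (Y \ {q}) :=
      posSpan_add (posSpan_smul ha.le (mem_posSpan_self ⟨hpY, fun h => hqp (Set.mem_singleton_iff.1 h).symm⟩))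
        (posSpan_smul hb.le (mem_posSpan_self ⟨hγY, fun h => hqγ (Set.mem_singleton_iff.1 h).symm⟩))
    rw [← heq] at hmem
    exact hmem
  have fund_mem : ∀ w, IsFundIn Y w → w ∈ seg N g i := by
    intro w hwf
    obtain ⟨jw, hjw, hgjw⟩ := Set.inter_subset_left hwf.1
    have : jw < jq := horder w q hwf hqY hqnf jw hjw jq hjqdom hgjw hgjq
    exact mem_seg_iff.2 ⟨jw, hjw, lt_trans this hjqi, hgjw⟩
  have hφψLI : LinearIndependent ℝ ![φ, ψ] := indep_of_pair (hYc hpY) (hYc hγY) hind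
  obtain ⟨f₁, f₂, h1φ, h1ψ, h2φ, h2ψ⟩ := exists_dual_pair hφψLI
  have hp0 : p ≠ 0 := hne p hpX
  have hq0 : q ≠ 0 := hne q hqX
  have hDpq : f₁ p * f₂ q - f₂ p * f₁ q
      = b * (f₁ p * f₂ (g i) - f₂ p * f₁ (g i)) := by
    rw [heq]
    simp only [map_add, map_smul, smul_eq_mul]
    ring
  have hDqγ : f₁ q * f₂ (g i) - f₂ q * f₁ (g i)
      = a * (f₁ p * f₂ (g i) - f₂ p * f₁ (g i)) := by
    rw [heq]
    simp only [map_add, map_smul, smul_eq_mul]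
    ring
  rcases le_or_gt 0 (f₁ p * f₂ (g i) - f₂ p * f₁ (g i)) with hD | hD
  · refine ⟨ψ, fund_mem ψ hψf, ?_, ?_⟩
    · exact cone2_step f₁ f₂ h1φ h1ψ h2φ h2ψ (hYc hpY) (hYc hqY) hp0
        (by rw [hDpq]; exact mul_nonneg hb.le hD)
    · exact cone2_step f₁ f₂ h1φ h1ψ h2φ h2ψ (hYc hqY) (hYc hγY) hq0
        (by rw [hDqγ]; exact mul_nonneg ha.le hD)
  · refine ⟨φ, fund_mem φ hφf, ?_, ?_⟩
    · refine cone2_step f₂ f₁ h2ψ h2φ h1ψ h1φ (cone2_comm φ ψ ▸ hYc hpY)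
        (cone2_comm φ ψ ▸ hYc hqY) hp0 ?_
      have := hDpq
      nlinarith
    · refine cone2_step f₂ f₁ h2ψ h2φ h1ψ h1φ (cone2_comm φ ψ ▸ hYc hqY)
        (cone2_comm φ ψ ▸ hYc hγY) hq0 ?_
      have := hDqγ
      nlinarith

end Helpers4
section Helpers5
variable {V : Type*} [AddCommGroup V] [Module ℝ V]

lemma sep_contra {N : ℕ∞} {g : ℕ → V} (hs : SuitableEnum N g) {i : ℕ} {Vs : Set V}
    (hV : IsBiclosedIn (seg N g i) Vs) {x₀ y₀ w : V}
    (hx₀ : x₀ ∈ seg N g i) (hy₀ : y₀ ∈ seg N g i) (hw : w ∈ seg N g i)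
    (main : ∀ F : Set V, IsFullIn (wholeSet N g) F → x₀ ∈ F → y₀ ∈ F → w ∈ F →
      ∃ ξ : V, ξ ∈ posSpan (Vs ∩ (F ∩ seg N g i)) ∧
        ξ ∈ posSpan ((F ∩ seg N g i) \ (Vs ∩ (F ∩ seg N g i))) ∧ ξ ≠ 0) : False := by
  obtain ⟨F, hFfull, hxF, hyF, hwF, hclean⟩ := hs.2.2.2 i x₀ hx₀ y₀ hy₀ w hw
  have hZ : (F ∩ seg N g i) ⊆ seg N g i := Set.inter_subset_right
  have hB := hV.restrict hZ
  have hws := hclean _ hB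
  obtain ⟨ξ, h1, h2, h3⟩ := main F hFfull hxF hyF hwF
  have : ξ ∈ posSpan (Vs ∩ (F ∩ seg N g i)) ∩
      posSpan ((F ∩ seg N g i) \ (Vs ∩ (F ∩ seg N g i))) := ⟨h1, h2⟩
  rw [hws.2] at this
  exact h3 this

end Helpers5
section StepLemma
variable {V : Type*} [AddCommGroup V] [Module ℝ V]

lemma step_lemma {N : ℕ∞} {g : ℕ → V} (hs : SuitableEnum N g) {m : ℕ} {U : Set V}
    (hU : IsCoclosedIn (seg N g m) U) (i : ℕ)
    (hV : IsBiclosedIn (seg N g i) (closureIn (seg N g i) (U ∩ seg N g i))) :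
    IsBiclosedIn (seg N g (i + 1)) (closureIn (seg N g (i + 1)) (U ∩ seg N g (i + 1))) ∧
      closureIn (seg N g i) (U ∩ seg N g i) ⊆
        closureIn (seg N g (i + 1)) (U ∩ seg N g (i + 1)) := by
  by_cases hdom : (i : ℕ∞) < N
  swap
  · rw [seg_succ_of_not_lt hdom]
    exact ⟨hV, subset_rfl⟩
  set Vs := closureIn (seg N g i) (U ∩ seg N g i) with hVsdef
  set γ := g i with hγdef
  obtain ⟨θ, hθ⟩ := hs.2.1
  have hne : ∀ x ∈ wholeSet N g, x ≠ (0 : V) := by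
    intro x hx h0
    have := hθ x hx
    rw [h0, map_zero] at this
    exact lt_irrefl 0 this
  have hray : ∀ x ∈ wholeSet N g, ∀ y ∈ wholeSet N g, ∀ t : ℝ, y = t • x → 0 < t := by
    intro x hx y hy t hxy
    have h1 := hθ x hx
    have h2 := hθ y hy
    rw [hxy, map_smul, smul_eq_mul] at h2
    nlinarith
  have hXsub : seg N g i ⊆ wholeSet N g := seg_subset_wholeSet N g i
  have hsucc : seg N g (i + 1) = insert γ (seg N g i) := seg_succ_of_lt hdom
  have hγX : γ ∈ wholeSet N g := mem_wholeSet_of_dom hdom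
  have hγns : γ ∉ seg N g i := not_mem_seg_self hs.1 hdom
  have hVsub : Vs ⊆ seg N g i :=
    (isClosedIn_closureIn Set.inter_subset_right).1
  have hUV : U ∩ seg N g i ⊆ Vs := subset_closureIn _ _
  have hVclosed : IsClosedIn (seg N g i) Vs := hV.1
  have hVcoc : IsClosedIn (seg N g i) (seg N g i \ Vs) := hV.2
  have hγnVs : γ ∉ Vs := fun h => hγns (hVsub h)
  have hiU : γ ∈ U → i < m := by
    intro hγU
    obtain ⟨j, hj, hjm, hgj⟩ := mem_seg_iff.1 (hU.1 hγU)
    rwa [hs.1 hj hdom hgj] at hjm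
  have hcompl : γ ∈ U → seg N g i \ Vs ⊆ seg N g m \ U := by
    intro hγU x hx
    exact ⟨seg_mono (le_of_lt (hiU hγU)) hx.1, fun hxU => hx.2 (hUV ⟨hxU, hx.1⟩)⟩
  -- generic: Vs is contained in the bigger closure
  have hVsubcl : Vs ⊆ closureIn (seg N g (i + 1)) (U ∩ seg N g (i + 1)) := by
    have hc1 : IsClosedIn (seg N g i)
        (closureIn (seg N g (i + 1)) (U ∩ seg N g (i + 1)) ∩ seg N g i) :=
      (isClosedIn_closureIn Set.inter_subset_right).restrict (seg_mono (Nat.le_succ i))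
    have hc2 : U ∩ seg N g i ⊆
        closureIn (seg N g (i + 1)) (U ∩ seg N g (i + 1)) ∩ seg N g i := by
      intro x hx
      exact ⟨subset_closureIn _ _ ⟨hx.1, seg_mono (Nat.le_succ i) hx.2⟩, hx.2⟩
    exact fun x hx => ((closureIn_subset hc2 hc1) hx).1
  -- ray crux : positive multiples of γ lying in seg i must be in Vs (when γ is addable)
  by_cases hgen : ∃ σ₀ ∈ Vs, ∃ τ₀ ∈ Vs, γ ∈ cone2 σ₀ τ₀
  case neg =>
    by_cases hγU : γ ∈ U
    case pos =>
      -- γ ∈ U but not generated: still added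
      have hi_m := hiU hγU
      have ray_crux : ∀ ζ ∈ seg N g i, ∀ t : ℝ, 0 ≤ t → ζ = t • γ → ζ ∈ Vs := by
        intro ζ hζ t ht heq
        by_contra hζV
        have hζ0 : ζ ≠ 0 := hne ζ (hXsub hζ)
        have ht0 : t ≠ 0 := fun h => hζ0 (by rw [heq, h, zero_smul])
        have htpos : 0 < t := lt_of_le_of_ne ht (Ne.symm ht0)
        have hγeq : γ = t⁻¹ • ζ := by
          rw [heq, smul_smul, inv_mul_cancel₀ ht0, one_smul]
        have : γ ∈ seg N g m \ U :=
          hU.2.2 ζ (hcompl hγU ⟨hζ, hζV⟩) ζ (hcompl hγU ⟨hζ, hζV⟩) γ (hU.1 hγU)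
            ⟨t⁻¹, 0, by positivity, le_refl 0, by rw [hγeq]; module⟩
        exact this.2 hγU
      have crux : ∀ σ ∈ Vs, ∀ ζ ∈ seg N g i, ∀ a b : ℝ, 0 ≤ a → 0 ≤ b →
          ζ = a • σ + b • γ → ζ ∈ Vs := by
        intro σ hσ ζ hζ a b ha hb heq
        rcases eq_or_lt_of_le hb with hb0 | hbpos
        · exact hVclosed.2 σ hσ σ hσ ζ hζ ⟨a, 0, ha, le_refl 0,
            by rw [heq, ← hb0]; module⟩
        by_contra hζV
        have hζ0 : ζ ≠ 0 := hne ζ (hXsub hζ)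
        have hσX : σ ∈ wholeSet N g := hXsub (hVsub hσ)
        by_cases hdep : ∀ s t : ℝ, s • σ + t • γ = 0 → s = 0 ∧ t = 0
        · rcases eq_or_lt_of_le ha with ha0 | hapos
          · -- ζ = b • γ : use ray_crux
            exact hζV (ray_crux ζ hζ b hb (by rw [heq, ← ha0]; module))
          · obtain ⟨w, hwseg, h1, h2⟩ := geom_lemma hs hdom (hVsub hσ) hζ hapos hbpos heq hdep
            by_cases hwV : w ∈ Vs
            · exact hζV (hVclosed.2 σ hσ w hwV ζ hζ h1)
            · have : γ ∈ seg N g m \ U :=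
                hU.2.2 ζ (hcompl hγU ⟨hζ, hζV⟩) w (hcompl hγU ⟨hwseg, hwV⟩) γ
                  (hU.1 hγU) h2
              exact this.2 hγU
        · -- γ is a positive multiple of σ
          push_neg at hdep
          obtain ⟨s, t, hst, hnz⟩ := hdep
          have ht0 : t ≠ 0 := by
            intro h
            rw [h, zero_smul, add_zero, smul_eq_zero] at hst
            rcases hst with h' | h'
            · exact hnz h' h
            · exact hne σ hσX h'
          have h4 : t • γ = -(s • σ) := by
            rw [add_comm] at hst
            exact add_eq_zero_iff_eq_neg.mp hst
          have h3 : γ = (-s / t) • σ := by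
            calc γ = t⁻¹ • (t • γ) := (inv_smul_smul₀ ht0 γ).symm
              _ = t⁻¹ • (-(s • σ)) := by rw [h4]
              _ = (-s / t) • σ := by match_scalars; field_simp
          have hr : 0 < -s / t := hray σ hσX γ hγX _ h3
          exact hζV (hVclosed.2 σ hσ σ hσ ζ hζ ⟨a + b * (-s / t), 0,
            add_nonneg ha (mul_nonneg hb hr.le), le_refl 0, by rw [heq, h3]; module⟩)
      -- W = insert γ Vs
      have hWclosed : IsClosedIn (seg N g (i + 1)) (insert γ Vs) := by
        constructor
        · rw [hsucc]
          exact Set.insert_subset_insert hVsub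
        · intro α hα β hβ ζ hζ hcone
          rw [hsucc] at hζ
          rcases hζ with rfl | hζ
          · exact Set.mem_insert _ _
          refine Set.mem_insert_of_mem _ ?_
          obtain ⟨a, b, ha, hb, heq⟩ := hcone
          rcases Set.mem_insert_iff.1 hα with rfl | hαV
          · rcases Set.mem_insert_iff.1 hβ with rfl | hβV
            · exact ray_crux ζ hζ (a + b) (add_nonneg ha hb) (by rw [heq]; module)
            · exact crux β hβV ζ hζ b a hb ha (by rw [heq]; module)
          · rcases Set.mem_insert_iff.1 hβ with rfl | hβV
            · exact crux α hαV ζ hζ a b ha hb heq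
            · exact hVclosed.2 α hαV β hβV ζ hζ ⟨a, b, ha, hb, heq⟩
      have hcompl_eq : seg N g (i + 1) \ insert γ Vs = seg N g i \ Vs := by
        rw [hsucc]
        ext x
        simp only [Set.mem_diff, Set.mem_insert_iff]
        constructor
        · rintro ⟨rfl | hx, hx2⟩
          · exact absurd (Or.inl rfl) hx2
          · exact ⟨hx, fun h => hx2 (Or.inr h)⟩
        · rintro ⟨hx, hx2⟩
          exact ⟨Or.inr hx, fun h => by
            rcases h with rfl | h
            exacts [hγns hx, hx2 h]⟩
      have hWcoc : IsClosedIn (seg N g (i + 1)) (seg N g (i + 1) \ insert γ Vs) := by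
        rw [hcompl_eq]
        constructor
        · exact fun x hx => seg_mono (Nat.le_succ i) hx.1
        · intro α hα β hβ ζ hζ hcone
          rw [hsucc] at hζ
          rcases hζ with rfl | hζ
          · -- γ generated by complement pair: contradicts U coclosed
            exfalso
            have : γ ∈ seg N g m \ U :=
              hU.2.2 α (hcompl hγU hα) β (hcompl hγU hβ) γ (hU.1 hγU) hcone
            exact this.2 hγU
          · exact hVcoc.2 α hα β hβ ζ hζ hcone
      have hWeq : closureIn (seg N g (i + 1)) (U ∩ seg N g (i + 1)) = insert γ Vs := by
        refine le_antisymm ?_ ?_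
        · refine closureIn_subset ?_ hWclosed
          rintro x ⟨hxU, hxseg⟩
          rw [hsucc] at hxseg
          rcases hxseg with rfl | hxseg
          · exact Set.mem_insert _ _
          · exact Set.mem_insert_of_mem _ (hUV ⟨hxU, hxseg⟩)
        · refine Set.insert_subset ?_ hVsubcl
          exact subset_closureIn _ _ ⟨hγU, by rw [hsucc]; exact Set.mem_insert _ _⟩
      rw [hWeq]
      exact ⟨⟨hWclosed, hWcoc⟩, Set.subset_insert _ _⟩
    case neg =>
      -- not added : W = Vs
      have hnadd : ¬ (γ ∈ U ∨ ∃ σ₀ ∈ Vs, ∃ τ₀ ∈ Vs, γ ∈ cone2 σ₀ τ₀) := by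
        rintro (h | h)
        exacts [hγU h, hgen h]
      have hWclosed : IsClosedIn (seg N g (i + 1)) Vs := by
        constructor
        · rw [hsucc]
          exact hVsub.trans (Set.subset_insert _ _)
        · intro α hα β hβ ζ hζ hcone
          rw [hsucc] at hζ
          rcases hζ with rfl | hζ
          · exact absurd ⟨α, hα, β, hβ, hcone⟩ hgen
          · exact hVclosed.2 α hα β hβ ζ hζ hcone
      -- complement analysis
      have notVs : ∀ σ' ∈ seg N g i \ Vs, ∀ ζ ∈ seg N g i, ∀ a b : ℝ, 0 ≤ a → 0 ≤ b →
          ζ = a • σ' + b • γ → ζ ∉ Vs := by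
        intro σ' hσ' ζ hζ a b ha hb heq hζV
        have hζ0 : ζ ≠ 0 := hne ζ (hXsub hζ)
        have hσX : σ' ∈ wholeSet N g := hXsub hσ'.1
        rcases eq_or_lt_of_le hb with hb0 | hbpos
        · exact (hVcoc.2 σ' hσ' σ' hσ' ζ hζ ⟨a, 0, ha, le_refl 0,
            by rw [heq, ← hb0]; module⟩).2 hζV
        by_cases hdep : ∀ s t : ℝ, s • σ' + t • γ = 0 → s = 0 ∧ t = 0
        · rcases eq_or_lt_of_le ha with ha0 | hapos
          · -- ζ = b • γ, so γ = b⁻¹ • ζ is generated by ζ ∈ Vs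
            have hb0' : b ≠ 0 := ne_of_gt hbpos
            have hγeq : γ = b⁻¹ • ζ := by
              rw [heq, ← ha0, zero_smul, zero_add, smul_smul, inv_mul_cancel₀ hb0', one_smul]
            exact hgen ⟨ζ, hζV, ζ, hζV, b⁻¹, 0, by positivity, le_refl 0,
              by rw [hγeq]; module⟩
          · obtain ⟨w, hwseg, h1, h2⟩ :=
              geom_lemma hs hdom hσ'.1 hζ hapos hbpos heq hdep
            by_cases hwV : w ∈ Vs
            · exact hgen ⟨ζ, hζV, w, hwV, h2⟩
            · exact (hVcoc.2 σ' hσ' w ⟨hwseg, hwV⟩ ζ hζ h1).2 hζV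
        · push_neg at hdep
          obtain ⟨s, t, hst, hnz⟩ := hdep
          have ht0 : t ≠ 0 := by
            intro h
            rw [h, zero_smul, add_zero, smul_eq_zero] at hst
            rcases hst with h' | h'
            · exact hnz h' h
            · exact hne σ' hσX h'
          have h4 : t • γ = -(s • σ') := by
            rw [add_comm] at hst
            exact add_eq_zero_iff_eq_neg.mp hst
          have h3 : γ = (-s / t) • σ' := by
            calc γ = t⁻¹ • (t • γ) := (inv_smul_smul₀ ht0 γ).symm
              _ = t⁻¹ • (-(s • σ')) := by rw [h4]
              _ = (-s / t) • σ' := by match_scalars; field_simp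
          have hr : 0 < -s / t := hray σ' hσX γ hγX _ h3
          exact (hVcoc.2 σ' hσ' σ' hσ' ζ hζ ⟨a + b * (-s / t), 0,
            add_nonneg ha (mul_nonneg hb hr.le), le_refl 0,
            by rw [heq, h3]; module⟩).2 hζV
      have hcompl_eq : seg N g (i + 1) \ Vs = insert γ (seg N g i \ Vs) := by
        rw [hsucc]
        ext x
        simp only [Set.mem_diff, Set.mem_insert_iff]
        constructor
        · rintro ⟨rfl | hx, hx2⟩
          · exact Or.inl rfl
          · exact Or.inr ⟨hx, hx2⟩
        · rintro (rfl | ⟨hx, hx2⟩)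
          · exact ⟨Or.inl rfl, hγnVs⟩
          · exact ⟨Or.inr hx, hx2⟩
      have hWcoc : IsClosedIn (seg N g (i + 1)) (seg N g (i + 1) \ Vs) := by
        rw [hcompl_eq]
        constructor
        · rw [hsucc]
          exact Set.insert_subset_insert fun x hx => hx.1
        · intro α hα β hβ ζ hζ hcone
          rw [hsucc] at hζ
          rcases hζ with rfl | hζ
          · exact Set.mem_insert _ _
          refine Set.mem_insert_of_mem _ ⟨hζ, ?_⟩
          obtain ⟨a, b, ha, hb, heq⟩ := hcone
          rcases Set.mem_insert_iff.1 hα with rfl | hαC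
          · rcases Set.mem_insert_iff.1 hβ with rfl | hβC
            · -- ζ a nonneg multiple of γ : if ζ ∈ Vs then γ generated, contra
              intro hζV
              have hζ0 : ζ ≠ 0 := hne ζ (hXsub hζ)
              have ht0 : a + b ≠ 0 := fun h => hζ0 (by
                rw [heq, ← add_smul, h, zero_smul])
              have hγeq : γ = (a + b)⁻¹ • ζ := by
                rw [heq, ← add_smul, smul_smul, inv_mul_cancel₀ ht0, one_smul]
              exact hgen ⟨ζ, hζV, ζ, hζV, (a + b)⁻¹, 0,
                inv_nonneg.2 (add_nonneg ha hb), le_refl 0, by rw [hγeq]; module⟩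
            · exact notVs β hβC ζ hζ b a hb ha (by rw [heq]; module)
          · rcases Set.mem_insert_iff.1 hβ with rfl | hβC
            · exact notVs α hαC ζ hζ a b ha hb heq
            · intro hζV
              exact (hVcoc.2 α hαC β hβC ζ hζ ⟨a, b, ha, hb, heq⟩).2 hζV
      have hWeq : closureIn (seg N g (i + 1)) (U ∩ seg N g (i + 1)) = Vs := by
        refine le_antisymm ?_ hVsubcl
        refine closureIn_subset ?_ hWclosed
        rintro x ⟨hxU, hxseg⟩
        rw [hsucc] at hxseg
        rcases hxseg with rfl | hxseg
        · exact absurd hxU hγU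
        · exact hUV ⟨hxU, hxseg⟩
      rw [hWeq]
      exact ⟨⟨hWclosed, hWcoc⟩, subset_rfl⟩
  case pos =>
    -- γ generated by a pair from Vs : added, use cleanness for the hard steps
    obtain ⟨σ₀, hσ₀, τ₀, hτ₀, a₀, b₀, ha₀, hb₀, hγeq⟩ := hgen
    have hσ₀s := hVsub hσ₀
    have hτ₀s := hVsub hτ₀
    have ray_crux : ∀ ζ ∈ seg N g i, ∀ t : ℝ, 0 ≤ t → ζ = t • γ → ζ ∈ Vs := by
      intro ζ hζ t ht heq
      exact hVclosed.2 σ₀ hσ₀ τ₀ hτ₀ ζ hζ ⟨t * a₀, t * b₀, mul_nonneg ht ha₀,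
        mul_nonneg ht hb₀, by rw [heq, hγeq]; module⟩
    have crux : ∀ σ ∈ Vs, ∀ ζ ∈ seg N g i, ∀ a b : ℝ, 0 ≤ a → 0 ≤ b →
        ζ = a • σ + b • γ → ζ ∈ Vs := by
      intro σ hσ ζ hζ a b ha hb heq
      rcases eq_or_lt_of_le hb with hb0 | hbpos
      · exact hVclosed.2 σ hσ σ hσ ζ hζ ⟨a, 0, ha, le_refl 0,
          by rw [heq, ← hb0]; module⟩
      rcases eq_or_lt_of_le ha with ha0 | hapos
      · exact ray_crux ζ hζ b hb (by rw [heq, ← ha0]; module)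
      by_contra hζV
      have hζ0 : ζ ≠ 0 := hne ζ (hXsub hζ)
      -- cleanness argument with the triple (σ₀, τ₀, ζ)
      refine sep_contra hs hV hσ₀s hτ₀s hζ ?_
      intro F hFfull hxF hyF hwF
      have hγF : γ ∈ F := hFfull.2 σ₀ hxF τ₀ hyF
        ⟨hγX, Submodule.mem_span_pair.2 ⟨a₀, b₀, hγeq.symm⟩⟩
      have ha0' : a ≠ 0 := ne_of_gt hapos
      have hσF : σ ∈ F := hFfull.2 ζ hwF γ hγF
        ⟨hXsub (hVsub hσ), Submodule.mem_span_pair.2 ⟨a⁻¹, -(b / a), by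
          rw [heq]; match_scalars <;> field_simp <;> ring⟩⟩
      refine ⟨ζ, ?_, ?_, hζ0⟩
      · have hval : ζ = a • σ + ((b * a₀) • σ₀ + (b * b₀) • τ₀) := by
          rw [heq, hγeq]; module
        rw [hval]
        exact posSpan_add (posSpan_smul ha (mem_posSpan_self ⟨hσ, hσF, hVsub hσ⟩))
          (posSpan_add (posSpan_smul (mul_nonneg hb ha₀)
              (mem_posSpan_self ⟨hσ₀, hxF, hσ₀s⟩))
            (posSpan_smul (mul_nonneg hb hb₀)
              (mem_posSpan_self ⟨hτ₀, hyF, hτ₀s⟩)))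
      · exact mem_posSpan_self ⟨⟨hwF, hζ⟩, fun hB => hζV hB.1⟩
    have hWclosed : IsClosedIn (seg N g (i + 1)) (insert γ Vs) := by
      constructor
      · rw [hsucc]
        exact Set.insert_subset_insert hVsub
      · intro α hα β hβ ζ hζ hcone
        rw [hsucc] at hζ
        rcases hζ with rfl | hζ
        · exact Set.mem_insert _ _
        refine Set.mem_insert_of_mem _ ?_
        obtain ⟨a, b, ha, hb, heq⟩ := hcone
        rcases Set.mem_insert_iff.1 hα with rfl | hαV
        · rcases Set.mem_insert_iff.1 hβ with rfl | hβV
          · exact ray_crux ζ hζ (a + b) (add_nonneg ha hb) (by rw [heq]; module)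
          · exact crux β hβV ζ hζ b a hb ha (by rw [heq]; module)
        · rcases Set.mem_insert_iff.1 hβ with rfl | hβV
          · exact crux α hαV ζ hζ a b ha hb heq
          · exact hVclosed.2 α hαV β hβV ζ hζ ⟨a, b, ha, hb, heq⟩
    have hcompl_eq : seg N g (i + 1) \ insert γ Vs = seg N g i \ Vs := by
      rw [hsucc]
      ext x
      simp only [Set.mem_diff, Set.mem_insert_iff]
      constructor
      · rintro ⟨rfl | hx, hx2⟩
        · exact absurd (Or.inl rfl) hx2
        · exact ⟨hx, fun h => hx2 (Or.inr h)⟩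
      · rintro ⟨hx, hx2⟩
        exact ⟨Or.inr hx, fun h => by
          rcases h with rfl | h
          exacts [hγns hx, hx2 h]⟩
    have hWcoc : IsClosedIn (seg N g (i + 1)) (seg N g (i + 1) \ insert γ Vs) := by
      rw [hcompl_eq]
      constructor
      · exact fun x hx => seg_mono (Nat.le_succ i) hx.1
      · intro α hα β hβ ζ hζ hcone
        rw [hsucc] at hζ
        rcases hζ with rfl | hζ
        · -- mixed generation: contradiction via cleanness
          exfalso
          obtain ⟨a', b', ha', hb', hγeq'⟩ := hcone
          have hγ0 : γ ≠ 0 := hne γ hγX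
          refine sep_contra hs hV hσ₀s hτ₀s hα.1 ?_
          intro F hFfull hxF hyF hwF
          have hγF : γ ∈ F := hFfull.2 σ₀ hxF τ₀ hyF
            ⟨hγX, Submodule.mem_span_pair.2 ⟨a₀, b₀, hγeq.symm⟩⟩
          refine ⟨γ, ?_, ?_, hγ0⟩
          · rw [hγeq]
            exact posSpan_add (posSpan_smul ha₀ (mem_posSpan_self ⟨hσ₀, hxF, hσ₀s⟩))
              (posSpan_smul hb₀ (mem_posSpan_self ⟨hτ₀, hyF, hτ₀s⟩))
          · rcases eq_or_lt_of_le hb' with hb'0 | hb'pos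
            · have : γ = a' • α := by rw [hγeq', ← hb'0]; module
              rw [this]
              exact posSpan_smul ha' (mem_posSpan_self ⟨⟨hwF, hα.1⟩, fun hB => hα.2 hB.1⟩)
            · have hβF : β ∈ F := hFfull.2 α hwF γ hγF
                ⟨hXsub hβ.1, Submodule.mem_span_pair.2 ⟨-(a' / b'), b'⁻¹, by
                  rw [hγeq']; match_scalars <;> field_simp <;> ring⟩⟩
              rw [hγeq']
              exact posSpan_add (posSpan_smul ha'
                  (mem_posSpan_self ⟨⟨hwF, hα.1⟩, fun hB => hα.2 hB.1⟩))
                (posSpan_smul hb'pos.le (mem_posSpan_self ⟨⟨hβF, hβ.1⟩, fun hB => hβ.2 hB.1⟩))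
        · exact hVcoc.2 α hα β hβ ζ hζ hcone
    have hWeq : closureIn (seg N g (i + 1)) (U ∩ seg N g (i + 1)) = insert γ Vs := by
      refine le_antisymm ?_ ?_
      · refine closureIn_subset ?_ hWclosed
        rintro x ⟨hxU, hxseg⟩
        rw [hsucc] at hxseg
        rcases hxseg with rfl | hxseg
        · exact Set.mem_insert _ _
        · exact Set.mem_insert_of_mem _ (hUV ⟨hxU, hxseg⟩)
      · refine Set.insert_subset ?_ hVsubcl
        have hclcl := isClosedIn_closureIn
          (Set.inter_subset_right : U ∩ seg N g (i + 1) ⊆ seg N g (i + 1))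
        exact hclcl.2 σ₀ (hVsubcl hσ₀) τ₀ (hVsubcl hτ₀) γ
          (by rw [hsucc]; exact Set.mem_insert _ _) ⟨a₀, b₀, ha₀, hb₀, hγeq⟩
    rw [hWeq]
    exact ⟨⟨hWclosed, hWcoc⟩, Set.subset_insert _ _⟩

end StepLemma
/-- If `X` has a suitable ordering, `Xₘ` is an initial segment, and `U`
is coclosed in `Xₘ`, then the closure of `U` in `X` is biclosed in `X`. -/
theorem closure_of_coclosed_isBiclosed
    (N : ℕ∞) (g : ℕ → V) (hs : SuitableEnum N g)
    (m : ℕ) (U : Set V) (hU : IsCoclosedIn (seg N g m) U) :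
    IsBiclosedIn (wholeSet N g) (closureIn (wholeSet N g) U) := by
  have hUX : U ⊆ seg N g m := hU.1
  set Vc : ℕ → Set V := fun i => closureIn (seg N g i) (U ∩ seg N g i) with hVc
  have base : IsBiclosedIn (seg N g 0) (Vc 0) := by
    have hseg0 : seg N g 0 = (∅ : Set V) := by
      ext x
      simp [mem_seg_iff]
    have h0 : Vc 0 = (∅ : Set V) := by
      have h1 : Vc 0 ⊆ seg N g 0 :=
        closureIn_subset Set.inter_subset_right (isClosedIn_self (seg N g 0))
      rw [hseg0] at h1
      exact Set.subset_empty_iff.1 h1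
    rw [hseg0, h0]
    refine ⟨⟨subset_rfl, fun α hα => absurd hα (Set.notMem_empty α)⟩, ?_⟩
    rw [Set.diff_self]
    exact ⟨subset_rfl, fun α hα => absurd hα (Set.notMem_empty α)⟩
  have all : ∀ i, IsBiclosedIn (seg N g i) (Vc i) := by
    intro i
    induction i with
    | zero => exact base
    | succ n ih => exact (step_lemma hs hU n ih).1
  have mono : ∀ i j, i ≤ j → Vc i ⊆ Vc j := by
    intro i j hij
    induction j with
    | zero => rw [Nat.le_zero.1 hij]
    | succ n ih =>
      rcases Nat.lt_succ_iff_lt_or_eq.1 (Nat.lt_succ_of_le hij) with h | rfl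
      · exact (ih (Nat.lt_succ_iff.1 h)).trans (step_lemma hs hU n (all n)).2
      · exact subset_rfl
  set K := ⋃ i, Vc i with hK
  have hKsub : K ⊆ wholeSet N g :=
    Set.iUnion_subset fun i => ((all i).1.1).trans (seg_subset_wholeSet N g i)
  have hmemseg : ∀ x ∈ wholeSet N g, ∃ i, x ∈ seg N g i := by
    rintro x ⟨j, hj, hgj⟩
    exact ⟨j + 1, mem_seg_iff.2 ⟨j, hj, Nat.lt_succ_self j, hgj⟩⟩
  have hKclosed : IsClosedIn (wholeSet N g) K := by
    refine ⟨hKsub, ?_⟩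
    intro α hα β hβ ζ hζ hcone
    obtain ⟨p, hp⟩ := Set.mem_iUnion.1 hα
    obtain ⟨q, hq⟩ := Set.mem_iUnion.1 hβ
    obtain ⟨k, hk⟩ := hmemseg ζ hζ
    refine Set.mem_iUnion.2 ⟨max (max p q) k, ?_⟩
    exact (all _).1.2 α (mono p _ (le_trans (le_max_left p q) (le_max_left _ k)) hp)
      β (mono q _ (le_trans (le_max_right p q) (le_max_left _ k)) hq)
      ζ (seg_mono (le_max_right _ k) hk) hcone
  have hUK : U ⊆ K := fun x hx =>
    Set.mem_iUnion.2 ⟨m, subset_closureIn _ _ ⟨hx, hUX hx⟩⟩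
  have hKC : closureIn (wholeSet N g) U = K := by
    refine le_antisymm (closureIn_subset hUK hKclosed) ?_
    refine Set.iUnion_subset fun i => ?_
    have hC : IsClosedIn (seg N g i) (closureIn (wholeSet N g) U ∩ seg N g i) :=
      (isClosedIn_closureIn (hUX.trans (seg_subset_wholeSet N g m))).restrict
        (seg_subset_wholeSet N g i)
    have hsub2 : U ∩ seg N g i ⊆ closureIn (wholeSet N g) U ∩ seg N g i :=
      fun x hx => ⟨subset_closureIn _ _ hx.1, hx.2⟩
    exact fun x hx => ((closureIn_subset hsub2 hC) hx).1
  rw [hKC]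
  refine ⟨hKclosed, Set.diff_subset, ?_⟩
  intro α hα β hβ ζ hζ hcone
  refine ⟨hζ, fun hζK => ?_⟩
  obtain ⟨k, hk⟩ := Set.mem_iUnion.1 hζK
  obtain ⟨p, hp⟩ := hmemseg α hα.1
  obtain ⟨q, hq⟩ := hmemseg β hβ.1
  set l := max (max p q) k with hl
  have hαl : α ∈ seg N g l \ Vc l :=
    ⟨seg_mono (le_trans (le_max_left p q) (le_max_left _ k)) hp,
      fun h => hα.2 (Set.mem_iUnion.2 ⟨l, h⟩)⟩
  have hβl : β ∈ seg N g l \ Vc l :=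
    ⟨seg_mono (le_trans (le_max_right p q) (le_max_left _ k)) hq,
      fun h => hβ.2 (Set.mem_iUnion.2 ⟨l, h⟩)⟩
  have hζl : ζ ∈ Vc l := mono k l (le_max_right _ k) hk
  exact ((all l).2.2 α hαl β hβl ζ ((all l).1.1 hζl) hcone).2 hζl
end

section
/- In type Ã₂ with the notation β_i^k, if J is a finite order ideal of the root poset in which γ = β_g^k is maximal, then for every h ∈ {1,...,6}, the largest j with β_h^j ∈ J (denoted k_h) equals k−1 or k. -/
open Set

variable {V : Type*} [AddCommGroup V] [Module ℝ V]

/-- The simple roots `α₁, α₂, α₃` of `Ã₂`, realized as the standard basis of `ℝ³`. -/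
noncomputable def simpleA (i : Fin 3) : Fin 3 → ℝ := Pi.single i 1

/-- The six vectors `β₁⁰, ..., β₆⁰`. -/
noncomputable def betaA : Fin 6 → (Fin 3 → ℝ) :=
  ![simpleA 0, simpleA 0 + simpleA 1, simpleA 1, simpleA 1 + simpleA 2, simpleA 2,
    simpleA 0 + simpleA 2]

/-- The primitive imaginary root `δ = α₁ + α₂ + α₃`. -/
noncomputable def deltaA : Fin 3 → ℝ := simpleA 0 + simpleA 1 + simpleA 2

/-- The root poset order of `Ã₂`: `x ⪯ y` iff `y - x ∈ Span₊{α₁, α₂, α₃}`. -/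
def rleA (x y : Fin 3 → ℝ) : Prop :=
  y - x ∈ posSpan {simpleA 0, simpleA 1, simpleA 2}

/-- The positive roots of `Ã₂`: `β_i^k = β_i⁰ + kδ` for `1 ≤ i ≤ 6`, `k ≥ 0`. -/
def posRootsA : Set (Fin 3 → ℝ) :=
  {v | ∃ (i : Fin 6) (k : ℕ), v = betaA i + k • deltaA}


open Classical in
lemma rleA_of_coords {x y : Fin 3 → ℝ} (h : ∀ m : Fin 3, x m ≤ y m) : rleA x y := by
  have h01 : simpleA 0 ≠ simpleA (1 : Fin 3) := by
    intro he
    have := congrFun he 0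
    simp [simpleA, Pi.single_apply] at this
  have h02 : simpleA 0 ≠ simpleA (2 : Fin 3) := by
    intro he
    have := congrFun he 0
    simp [simpleA, Pi.single_apply] at this
  have h12 : simpleA 1 ≠ simpleA (2 : Fin 3) := by
    intro he
    have := congrFun he 1
    simp [simpleA, Pi.single_apply] at this
  refine ⟨{simpleA 0, simpleA 1, simpleA 2},
    fun v => if v = simpleA 0 then (y - x) 0 else if v = simpleA 1 then (y - x) 1
      else (y - x) 2, ?_, ?_, ?_⟩
  · intro v hv
    simp only [Finset.coe_insert, Finset.coe_singleton] at hv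
    simpa using hv
  · intro v hv
    have d : ∀ m : Fin 3, 0 ≤ (y - x) m := fun m => by
      simpa using sub_nonneg.mpr (h m)
    dsimp only
    split_ifs <;> exact d _
  · rw [Finset.sum_insert (by simp [h01, h02]), Finset.sum_insert (by simp [h12]),
      Finset.sum_singleton]
    simp only [if_pos rfl, if_neg h01.symm, if_neg h02.symm, if_neg h12.symm]
    funext m
    fin_cases m <;>
      simp [simpleA, Pi.single_apply, Fin.ext_iff] <;> ring

lemma betaA_nonneg (i : Fin 6) (m : Fin 3) : 0 ≤ betaA i m := by
  fin_cases i <;> fin_cases m <;>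
    norm_num [betaA, simpleA, Pi.single_apply, Fin.ext_iff]

lemma betaA_le_one (i : Fin 6) (m : Fin 3) : betaA i m ≤ 1 := by
  fin_cases i <;> fin_cases m <;>
    norm_num [betaA, simpleA, Pi.single_apply, Fin.ext_iff]

lemma deltaA_apply (m : Fin 3) : deltaA m = 1 := by
  fin_cases m <;> norm_num [deltaA, simpleA, Pi.single_apply, Fin.ext_iff]

lemma root_apply (i : Fin 6) (n : ℕ) (m : Fin 3) :
    (betaA i + n • deltaA) m = betaA i m + n := by
  simp [deltaA_apply, Pi.smul_apply]

/-- In `Ã₂`, if `J` is a finite order ideal of the root poset in which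
`γ = β_g^k` is maximal, then for every `h ∈ {1,...,6}` the largest `j` with
`β_h^j ∈ J` equals `k − 1` or `k`; i.e., `β_h^j ∈ J` implies `j ≤ k`, and
`β_h^j ∈ J` whenever `j < k`. -/
theorem kh_eq_k_or_k_sub_one
    (J : Set (Fin 3 → ℝ)) (hJfin : J.Finite) (hJsub : J ⊆ posRootsA)
    (hIdeal : ∀ γ ∈ J, ∀ b ∈ posRootsA, rleA b γ → b ∈ J)
    (g : Fin 6) (k : ℕ)
    (hmem : betaA g + k • deltaA ∈ J)
    (hmax : ∀ b ∈ J, rleA (betaA g + k • deltaA) b → b = betaA g + k • deltaA) :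
    ∀ h : Fin 6,
      (∀ j : ℕ, betaA h + j • deltaA ∈ J → j ≤ k) ∧
      (∀ j : ℕ, j < k → betaA h + j • deltaA ∈ J) := by
  intro h
  constructor
  · intro j hj
    by_contra hjk
    push_neg at hjk
    have hle : rleA (betaA g + k • deltaA) (betaA h + j • deltaA) := by
      apply rleA_of_coords
      intro m
      rw [root_apply, root_apply]
      have h1 : (k : ℝ) + 1 ≤ j := by exact_mod_cast hjk
      have := betaA_nonneg h m
      have := betaA_le_one g m
      linarith
    have heq := hmax _ hj hle
    have e0 := congrFun heq 0
    have e1 := congrFun heq 1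
    have e2 := congrFun heq 2
    rw [root_apply, root_apply] at e0 e1 e2
    have h1 : (k : ℝ) + 1 ≤ j := by exact_mod_cast hjk
    have b0 := betaA_nonneg h 0; have b1 := betaA_nonneg h 1
    have b2 := betaA_nonneg h 2
    have c0 := betaA_le_one g 0; have c1 := betaA_le_one g 1
    have c2 := betaA_le_one g 2
    have sg : betaA g 0 + betaA g 1 + betaA g 2 ≤ 2 := by
      fin_cases g <;>
        norm_num [betaA, simpleA, Pi.single_apply, Fin.ext_iff]
    have sh : betaA h 0 + betaA h 1 + betaA h 2 ≤ 2 := by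
      fin_cases h <;>
        norm_num [betaA, simpleA, Pi.single_apply, Fin.ext_iff]
    linarith
  · intro j hjk
    refine hIdeal _ hmem _ ⟨h, j, rfl⟩ ?_
    apply rleA_of_coords
    intro m
    rw [root_apply, root_apply]
    have h1 : (j : ℝ) + 1 ≤ k := by exact_mod_cast hjk
    have := betaA_nonneg g m
    have := betaA_le_one h m
    linarith
end

section
/- Under folding Conditions 1 and 2, if I is an order ideal in the root poset of Φ⁺ and B is biclosed in I, then f⁻¹(B) is biclosed in f⁻¹(I). -/
open Set

variable {V : Type*} [AddCommGroup V] [Module ℝ V]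

/-- A (symmetrizable, crystallographic, real, reduced) root system with a chosen base. -/
structure RootSystemData (V : Type*) [AddCommGroup V] [Module ℝ V] where
  form : V →ₗ[ℝ] V →ₗ[ℝ] ℝ
  symm : ∀ x y : V, form x y = form y x
  Φ : Set V
  base : Set V
  base_sub : base ⊆ Φ
  pos_self : ∀ α ∈ Φ, 0 < form α α
  refl_mem : ∀ α ∈ Φ, ∀ β ∈ Φ, β - (2 * form α β / form α α) • α ∈ Φ
  reduced : ∀ α ∈ Φ, ∀ r : ℝ, r • α ∈ Φ → r = 1 ∨ r = -1
  pos_neg : ∀ α ∈ Φ, Xor' (α ∈ posSpan base) (-α ∈ posSpan base)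
  base_min : ∀ α ∈ base, α ∉ posSpan (base \ {α})
  cryst : ∀ α ∈ Φ, α ∈ AddSubgroup.closure base

variable {V : Type*} [AddCommGroup V] [Module ℝ V]

/-- The positive roots. -/
def RootSystemData.pos (R : RootSystemData V) : Set V := R.Φ ∩ posSpan R.base

/-- A root subsystem: a subset closed under the reflections over its own elements. -/
def RootSystemData.IsSubsystem (R : RootSystemData V) (Λ : Set V) : Prop :=
  Λ ⊆ R.Φ ∧ ∀ α ∈ Λ, ∀ β ∈ Λ, β - (2 * R.form α β / R.form α α) • α ∈ Λ

/-- A full subsystem: `F ∩ Span{α,β} = Φ ∩ Span{α,β}` for all `α, β ∈ F`. -/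
def RootSystemData.IsFullSub (R : RootSystemData V) (F : Set V) : Prop :=
  ∀ α ∈ F, ∀ β ∈ F, R.Φ ∩ (Submodule.span ℝ {α, β} : Set V) ⊆ F

/-- The fundamental roots of a subsystem `Λ`: positive roots of `Λ` not expressible as
nonnegative combinations of the other positive roots of `Λ`. -/
def RootSystemData.fund (R : RootSystemData V) (Λ : Set V) : Set V :=
  {γ | γ ∈ Λ ∩ posSpan R.base ∧ γ ∉ posSpan ((Λ ∩ posSpan R.base) \ {γ})}

/-- The root poset: `x ⪯ y` iff `y - x` is a nonnegative combination of base roots. -/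
def rootLE (R : RootSystemData V) (x y : V) : Prop := y - x ∈ posSpan R.base

/-- An order ideal in the root poset of the positive roots. -/
def IsOrderIdealOf (R : RootSystemData V) (I : Set V) : Prop :=
  I ⊆ R.pos ∧ ∀ γ ∈ I, ∀ β ∈ R.pos, rootLE R β γ → β ∈ I

/-- Under folding Conditions 1 and 2, if `I` is an order ideal of `Φ⁺`
and `B` is biclosed in `I`, then `f⁻¹(B)` is biclosed in `f⁻¹(I)`. -/
theorem preimage_biclosed_of_folding
    {W : Type*} [AddCommGroup W] [Module ℝ W]
    (R : RootSystemData V) (Rh : RootSystemData W)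
    (i : V →ₗ[ℝ] W) (p : W →ₗ[ℝ] V)
    (hi : Function.Injective i) (hp : Function.Surjective p)
    (hcond1 : p '' Rh.base = R.base) (hcond2 : p '' Rh.Φ = R.Φ)
    (I : Set V) (hI : IsOrderIdealOf R I)
    (B : Set V) (hB : IsBiclosedIn I B) :
    IsBiclosedIn {b | b ∈ Rh.Φ ∧ p b ∈ I} {b | b ∈ Rh.Φ ∧ p b ∈ B} := by
  obtain ⟨⟨hBI, hBcl⟩, hIBI, hIBcl⟩ := hB
  have key : ∀ (α β γ : W), γ ∈ cone2 α β → p γ ∈ cone2 (p α) (p β) := by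
    rintro α β γ ⟨a, b, ha, hb, rfl⟩
    exact ⟨a, b, ha, hb, by simp [map_add, map_smul]⟩
  constructor
  · refine ⟨fun x hx => ⟨hx.1, hBI hx.2⟩, ?_⟩
    rintro α ⟨hαΦ, hαB⟩ β ⟨hβΦ, hβB⟩ γ ⟨hγΦ, hγI⟩ hc
    exact ⟨hγΦ, hBcl _ hαB _ hβB _ hγI (key _ _ _ hc)⟩
  · constructor
    · rintro x ⟨⟨hxΦ, hxI⟩, hx⟩
      exact ⟨hxΦ, hxI⟩
    · rintro α ⟨⟨hαΦ, hαI⟩, hα⟩ β ⟨⟨hβΦ, hβI⟩, hβ⟩ γ ⟨hγΦ, hγI⟩ hc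
      have hαB : p α ∉ B := fun h => hα ⟨hαΦ, h⟩
      have hβB : p β ∉ B := fun h => hβ ⟨hβΦ, h⟩
      have := hIBcl _ ⟨hαI, hαB⟩ _ ⟨hβI, hβB⟩ _ hγI (key _ _ _ hc)
      exact ⟨⟨hγΦ, hγI⟩, fun h => this.2 h.2⟩
end

section
/- Under folding Conditions 1–3, if I is an order ideal of Φ⁺, B is biclosed in I, and f⁻¹(B) is separable in f⁻¹(I), then B is separable in I. -/
open Set

variable {V : Type*} [AddCommGroup V] [Module ℝ V]

variable {V : Type*} [AddCommGroup V] [Module ℝ V]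

private lemma posSpan_neg_eval {W : Type*} [AddCommGroup W] [Module ℝ W]
    (θ : Module.Dual ℝ W) (S : Set W) (hS : ∀ b ∈ S, θ b < 0)
    (v : W) (hv : v ∈ posSpan S) (hv0 : v ≠ 0) : θ v < 0 := by
  obtain ⟨s, c, hsub, hc, rfl⟩ := hv
  have hex : ∃ x ∈ s, 0 < c x := by
    by_contra h
    push_neg at h
    apply hv0
    apply Finset.sum_eq_zero
    intro x hx
    have : c x = 0 := le_antisymm (h x hx) (hc x hx)
    simp [this]
  obtain ⟨x₀, hx₀, hc₀⟩ := hex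
  have hmap : θ (∑ x ∈ s, c x • x) = ∑ x ∈ s, c x * θ x := by
    rw [map_sum]; exact Finset.sum_congr rfl (fun x _ => by simp)
  rw [hmap]
  have h1 : ∀ x ∈ s, c x * θ x ≤ (fun _ => (0:ℝ)) x := by
    intro x hx
    exact mul_nonpos_of_nonneg_of_nonpos (hc x hx) (le_of_lt (hS x (hsub hx)))
  have h2 : ∑ x ∈ s, c x * θ x < ∑ x ∈ s, (fun _ => (0:ℝ)) x :=
    Finset.sum_lt_sum h1 ⟨x₀, hx₀, mul_neg_of_pos_of_neg hc₀ (hS x₀ (hsub hx₀))⟩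
  simpa using h2

/-- Under folding Conditions 1–3, if `I` is an order ideal of `Φ⁺`, `B`
is biclosed in `I`, and `f⁻¹(B)` is separable in `f⁻¹(I)`, then `B` is separable
in `I`. -/
theorem pushforward_separable_of_folding
    {W : Type*} [AddCommGroup W] [Module ℝ W]
    (R : RootSystemData V) (Rh : RootSystemData W)
    (i : V →ₗ[ℝ] W) (p : W →ₗ[ℝ] V)
    (hi : Function.Injective i) (hp : Function.Surjective p)
    (hcond1 : p '' Rh.base = R.base) (hcond2 : p '' Rh.Φ = R.Φ)
    (hcond3 : ∀ α ∈ R.Φ, i α ∈ posSpan {b | b ∈ Rh.Φ ∧ p b = α})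
    (I : Set V) (hI : IsOrderIdealOf R I)
    (B : Set V) (hB : IsBiclosedIn I B)
    (hsep : SeparableIn {b | b ∈ Rh.Φ ∧ p b ∈ I} {b | b ∈ Rh.Φ ∧ p b ∈ B}) :
    SeparableIn I B := by
  obtain ⟨hBI, hclB⟩ := hB.1
  obtain ⟨-, θ, hθneg, hθpos⟩ := hsep
  have hIpos : I ⊆ R.pos := hI.1
  have hzero : (0:V) ∉ R.Φ := by
    intro h
    have := R.pos_self 0 h
    simp at this
  have hroot : ∀ α ∈ I, α ∈ R.Φ ∧ α ≠ 0 := by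
    intro α hα
    have hΦ : α ∈ R.Φ := (hIpos hα).1
    exact ⟨hΦ, fun h => hzero (h ▸ hΦ)⟩
  refine ⟨hBI, θ.comp i, ?_, ?_⟩
  · intro α hα
    obtain ⟨hΦ, hne⟩ := hroot α (hBI hα)
    have hne' : i α ≠ 0 := fun h => hne (hi (by simpa using h))
    exact posSpan_neg_eval θ {b | b ∈ Rh.Φ ∧ p b = α}
      (fun b hb => hθneg b ⟨hb.1, hb.2 ▸ hα⟩)
      (i α) (hcond3 α hΦ) hne'
  · intro α hα
    obtain ⟨hΦ, hne⟩ := hroot α hα.1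
    have hne' : i α ≠ 0 := fun h => hne (hi (by simpa using h))
    have : (-θ) (i α) < 0 := by
      refine posSpan_neg_eval (-θ) {b | b ∈ Rh.Φ ∧ p b = α}
        (fun b hb => ?_) (i α) (hcond3 α hΦ) hne'
      have := hθpos b ⟨⟨hb.1, hb.2 ▸ hα.1⟩, fun hc => hα.2 (hb.2 ▸ hc.2)⟩
      simpa using this
    simpa using this
end
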